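/- arXiv:1401.6362 — 5 statements merged into one kernel-verified Lean document; each statement's English description precedes it below -/
import Mathlib

section
/- For every integer T ≥ 2 and every real γ > 0, the BKIC achievable rate strictly exceeds the traditional KIC achievable rate: (1 − 1/T)·log(1 + γ) > log(1 + (T−1)γ/(T+γ)). -/
lemma bernoulli_strict (a : ℝ) (ha : 0 < a) (n : ℕ) (hn : 2 ≤ n) :
    1 + n * a < (1 + a) ^ n := by
  obtain ⟨m, rfl⟩ := Nat.exists_eq_add_of_le hn
  have h1 : (1 + (m : ℝ) * a) ≤ (1 + a) ^ m := one_add_mul_le_pow (by linarith) m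
  have h2 : (1 + a) ^ (2 + m) = (1 + a) ^ 2 * (1 + a) ^ m := by ring
  have hpos : (0:ℝ) < 1 + a := by linarith
  have h3 : (1 + a) ^ 2 * (1 + (m : ℝ) * a) ≤ (1 + a) ^ 2 * (1 + a) ^ m :=
    mul_le_mul_of_nonneg_left h1 (by positivity)
  have hm : (0:ℝ) ≤ (m : ℝ) := Nat.cast_nonneg m
  have : (1 : ℝ) + (2 + m : ℕ) * a < (1 + a) ^ 2 * (1 + (m : ℝ) * a) := by
    push_cast
    nlinarith [mul_pos ha ha, mul_nonneg hm (mul_pos ha ha).le, mul_nonneg hm (mul_pos (mul_pos ha ha) ha).le]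
  calc (1 : ℝ) + (2 + m : ℕ) * a < (1 + a) ^ 2 * (1 + (m : ℝ) * a) := this
    _ ≤ (1 + a) ^ 2 * (1 + a) ^ m := h3
    _ = (1 + a) ^ (2 + m) := h2.symm

/-- For every integer T ≥ 2 and every real γ > 0, the BKIC achievable rate strictly
exceeds the traditional KIC achievable rate. -/
theorem bkic_rate_gt_traditional (T : ℤ) (hT : 2 ≤ T) (γ : ℝ) (hγ : 0 < γ) :
    (1 - 1 / (T : ℝ)) * Real.log (1 + γ) >
      Real.log (1 + ((T : ℝ) - 1) * γ / ((T : ℝ) + γ)) := by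
  have ht2 : (2:ℝ) ≤ (T : ℝ) := by exact_mod_cast hT
  set t : ℝ := (T : ℝ) with htdef
  have ht0 : 0 < t := by linarith
  have htγ : 0 < t + γ := by linarith
  have hn : ((T.toNat : ℕ) : ℝ) = t := by
    rw [htdef]; exact_mod_cast Int.toNat_of_nonneg (by linarith : (0:ℤ) ≤ T)
  have hn2 : 2 ≤ T.toNat := by omega
  have ha : 0 < γ / t := div_pos hγ ht0
  have hbern := bernoulli_strict (γ / t) ha T.toNat hn2
  rw [hn] at hbern
  have hmul : t * (γ / t) = γ := by field_simp
  rw [hmul] at hbern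
  -- take logs
  have h1γ : (0:ℝ) < 1 + γ := by linarith
  have h1a : (0:ℝ) < 1 + γ / t := by positivity
  have hlog : Real.log (1 + γ) < T.toNat * Real.log (1 + γ / t) := by
    have := Real.log_lt_log h1γ hbern
    rwa [Real.log_pow] at this
  rw [hn] at hlog
  -- rewrite 1 + γ/t = (t+γ)/t
  have hrw : 1 + γ / t = (t + γ) / t := by field_simp
  rw [hrw, Real.log_div (by positivity) (ne_of_gt ht0)] at hlog
  -- rewrite RHS
  have hrhs : 1 + (t - 1) * γ / (t + γ) = t * (1 + γ) / (t + γ) := by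
    field_simp; ring
  rw [hrhs, Real.log_div (by positivity) (ne_of_gt htγ),
    Real.log_mul (ne_of_gt ht0) (ne_of_gt h1γ)]
  have key : Real.log (1 + γ) / t < Real.log (t + γ) - Real.log t := by
    rw [div_lt_iff₀ ht0]
    nlinarith
  have expand : (1 - 1 / t) * Real.log (1 + γ)
      = Real.log (1 + γ) - Real.log (1 + γ) / t := by ring
  rw [expand]
  linarith
end

section
/- For every real T > 1, the function g(γ) = log(1 + (T−1)γ/(T+γ)) − (1 − 1/T)·log(1 + γ) is differentiable on (0,∞) and its derivative at every γ > 0 equals −(T−1)γ / (T·(1+γ)·(T+γ)); in particular this derivative is strictly negative for γ > 0. -/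
/-- For every real T > 1, the function g(γ) = log(1 + (T−1)γ/(T+γ)) − (1 − 1/T)·log(1+γ)
has derivative −(T−1)γ/(T(1+γ)(T+γ)) at every γ > 0, which is strictly negative. -/
theorem deriv_rate_gap (T : ℝ) (hT : 1 < T) (γ : ℝ) (hγ : 0 < γ) :
    HasDerivAt (fun x : ℝ => Real.log (1 + (T - 1) * x / (T + x)) - (1 - 1 / T) * Real.log (1 + x))
      (-((T - 1) * γ) / (T * (1 + γ) * (T + γ))) γ ∧
    -((T - 1) * γ) / (T * (1 + γ) * (T + γ)) < 0 := by
  have hT0 : (0:ℝ) < T := by linarith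
  have h1γ : (0:ℝ) < 1 + γ := by linarith
  have hTγ : (0:ℝ) < T + γ := by linarith
  constructor
  · -- auxiliary function
    have key : HasDerivAt
        (fun x : ℝ => (Real.log T + Real.log (1 + x) - Real.log (T + x))
          - (1 - 1 / T) * Real.log (1 + x))
        (-((T - 1) * γ) / (T * (1 + γ) * (T + γ))) γ := by
      have h1 : HasDerivAt (fun x : ℝ => Real.log (1 + x)) (1 / (1 + γ)) γ := by
        have := ((hasDerivAt_id γ).const_add 1).log (ne_of_gt h1γ)
        simpa using this
      have h2 : HasDerivAt (fun x : ℝ => Real.log (T + x)) (1 / (T + γ)) γ := by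
        have := ((hasDerivAt_id γ).const_add T).log (ne_of_gt hTγ)
        simpa using this
      have h : HasDerivAt
          (fun x : ℝ => (Real.log T + Real.log (1 + x) - Real.log (T + x))
            - (1 - 1 / T) * Real.log (1 + x))
          ((1 / (1 + γ) - 1 / (T + γ)) - (1 - 1 / T) * (1 / (1 + γ))) γ :=
        ((h1.const_add (Real.log T)).sub h2).sub (h1.const_mul _)
      convert h using 1
      field_simp
      ring
    refine key.congr_of_eventuallyEq ?_
    have hmem : {x : ℝ | 0 < x} ∈ nhds γ := isOpen_lt' 0 |>.mem_nhds hγ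
    filter_upwards [hmem] with x hx
    have h1x : (0:ℝ) < 1 + x := by linarith
    have hTx : (0:ℝ) < T + x := by linarith
    have harg : 1 + (T - 1) * x / (T + x) = T * (1 + x) / (T + x) := by
      field_simp; ring
    rw [harg, Real.log_div (by positivity) (ne_of_gt hTx),
      Real.log_mul (ne_of_gt hT0) (ne_of_gt h1x)]
  · apply div_neg_of_neg_of_pos
    · nlinarith
    · positivity
end

section
/- For every real T > 1, the gap R_BKIC(T,γ) − R_t(T,γ) = (1 − 1/T)·log(1 + γ) − log(1 + (T−1)γ/(T+γ)) tends to +∞ as γ tends to +∞. -/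
open Filter

/-- For every real T > 1, the gap R_BKIC − R_t tends to +∞ as γ → +∞. -/
theorem gap_tendsto_atTop (T : ℝ) (hT : 1 < T) :
    Tendsto (fun γ : ℝ =>
        (1 - 1 / T) * Real.log (1 + γ) - Real.log (1 + (T - 1) * γ / (T + γ)))
      atTop atTop := by
  have hT0 : (0:ℝ) < T := lt_trans one_pos hT
  have hc : 0 < 1 - 1 / T := by
    have : 1 / T < 1 := by
      rw [div_lt_one hT0]; exact hT
    linarith
  have h1 : Tendsto (fun γ : ℝ => (1 - 1 / T) * Real.log (1 + γ) - Real.log T)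
      atTop atTop := by
    apply Filter.tendsto_atTop_add_const_right
    apply Tendsto.const_mul_atTop hc
    exact Real.tendsto_log_atTop.comp (tendsto_atTop_add_const_left _ 1 tendsto_id)
  refine tendsto_atTop_mono' atTop ?_ h1
  filter_upwards [eventually_ge_atTop (0:ℝ)] with γ hγ
  have hTγ : 0 < T + γ := by linarith
  have hfrac : 0 ≤ (T - 1) * γ / (T + γ) :=
    div_nonneg (by nlinarith) hTγ.le
  have hle : 1 + (T - 1) * γ / (T + γ) ≤ T := by
    have : (T - 1) * γ / (T + γ) ≤ T - 1 := by
      rw [div_le_iff₀ hTγ]; nlinarith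
    linarith
  have := Real.log_le_log (by linarith : (0:ℝ) < 1 + (T - 1) * γ / (T + γ)) hle
  linarith
end

section
/- Fix reals γ > 0 and ρ > 0. As the integer block length T tends to infinity, the difference C_u(T,ρ,γ) − R_t(T,γ) = [(1 − 1/T)·log(1+γ) + (1/T)·log(1 + ργ/(ρ + Tγ))] − log(1 + (T−1)γ/(T+γ)) tends to 0. -/
open Filter

/-- Fix γ > 0 and ρ > 0. As the block length T → ∞, the difference C_u − R_t tends to 0. -/
theorem upper_minus_traditional_tendsto_zero (γ ρ : ℝ) (hγ : 0 < γ) (hρ : 0 < ρ) :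
    Tendsto (fun T : ℕ =>
        ((1 - 1 / (T : ℝ)) * Real.log (1 + γ)
          + (1 / (T : ℝ)) * Real.log (1 + ρ * γ / (ρ + (T : ℝ) * γ)))
        - Real.log (1 + ((T : ℝ) - 1) * γ / ((T : ℝ) + γ)))
      atTop (nhds 0) := by
  have hT : Tendsto (fun T : ℕ => (T : ℝ)) atTop atTop := tendsto_natCast_atTop_atTop
  have hinv : Tendsto (fun T : ℕ => 1 / (T : ℝ)) atTop (nhds 0) := by
    simpa [one_div, Pi.inv_def] using hT.inv_tendsto_atTop
  -- Term A
  have hA : Tendsto (fun T : ℕ => (1 - 1 / (T : ℝ)) * Real.log (1 + γ)) atTop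
      (nhds (Real.log (1 + γ))) := by
    have := ((tendsto_const_nhds (x := (1:ℝ))).sub hinv).mul_const (Real.log (1 + γ))
    simpa using this
  -- Term B
  have hden : Tendsto (fun T : ℕ => ρ + (T : ℝ) * γ) atTop atTop :=
    tendsto_atTop_add_const_left _ ρ (hT.atTop_mul_const hγ)
  have hfrac : Tendsto (fun T : ℕ => ρ * γ / (ρ + (T : ℝ) * γ)) atTop (nhds 0) := by
    have := hden.inv_tendsto_atTop.const_mul (ρ * γ)
    simpa [div_eq_mul_inv] using this
  have hB : Tendsto (fun T : ℕ => (1 / (T : ℝ)) * Real.log (1 + ρ * γ / (ρ + (T : ℝ) * γ)))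
      atTop (nhds 0) := by
    have hlog : Tendsto (fun T : ℕ => Real.log (1 + ρ * γ / (ρ + (T : ℝ) * γ))) atTop
        (nhds (Real.log 1)) := by
      exact ((Real.continuousAt_log one_ne_zero).tendsto.comp
        (by simpa using tendsto_const_nhds.add hfrac))
    simpa using hinv.mul hlog
  -- Term C
  have hC : Tendsto (fun T : ℕ => Real.log (1 + ((T : ℝ) - 1) * γ / ((T : ℝ) + γ))) atTop
      (nhds (Real.log (1 + γ))) := by
    have hinner : Tendsto (fun T : ℕ => 1 + ((T : ℝ) - 1) * γ / ((T : ℝ) + γ)) atTop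
        (nhds (1 + γ)) := by
      have hden2 : Tendsto (fun T : ℕ => (T : ℝ) + γ) atTop atTop :=
        tendsto_atTop_add_const_right _ γ hT
      have key : Tendsto (fun T : ℕ => 1 + (γ - γ * (1 + γ) * ((T : ℝ) + γ)⁻¹)) atTop
          (nhds (1 + γ)) := by
        have := (tendsto_const_nhds (x := γ)).sub (hden2.inv_tendsto_atTop.const_mul (γ * (1 + γ)))
        have h2 : Tendsto (fun T : ℕ => γ - γ * (1 + γ) * ((T : ℝ) + γ)⁻¹) atTop (nhds γ) := by
          simpa using this
        simpa using tendsto_const_nhds.add h2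
      refine key.congr' ?_
      filter_upwards [eventually_gt_atTop 0] with T hT1
      have hTpos : (0 : ℝ) < (T : ℝ) := by exact_mod_cast hT1
      have hne : (T : ℝ) + γ ≠ 0 := by positivity
      field_simp
      ring
    have hne : (1 : ℝ) + γ ≠ 0 := by positivity
    exact (Real.continuousAt_log hne).tendsto.comp hinner
  have := (hA.add hB).sub hC
  simpa using this
end

section
/- Fix a real T > 1. As γ → +∞, the normalized BKIC rate R_BKIC(T,γ)/log γ = (1 − 1/T)·log(1+γ)/log γ tends to 1 − 1/T (nonzero degrees of freedom), while the normalized traditional KIC rate R_t(T,γ)/log γ = log(1 + (T−1)γ/(T+γ))/log γ tends to 0 (zero degrees of freedom). -/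
open Filter

lemma log_ratio_limit : Tendsto (fun γ : ℝ => Real.log (1 + γ) / Real.log γ)
    atTop (nhds 1) := by
  have h1 : Tendsto (fun γ : ℝ => 1 + Real.log (1 + 1/γ) / Real.log γ)
      atTop (nhds 1) := by
    have hnum : Tendsto (fun γ : ℝ => Real.log (1 + 1/γ)) atTop (nhds 0) := by
      have : Tendsto (fun γ : ℝ => 1 + 1/γ) atTop (nhds 1) := by
        simpa using (tendsto_const_nhds.add tendsto_inv_atTop_zero (f := fun _ : ℝ => (1:ℝ)))
      have := (Real.continuousAt_log (by norm_num : (1:ℝ) ≠ 0)).tendsto.comp this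
      simpa [Function.comp_def] using this
    have hinv : Tendsto (fun γ : ℝ => (Real.log γ)⁻¹) atTop (nhds 0) :=
      Real.tendsto_log_atTop.inv_tendsto_atTop
    have := hnum.mul hinv
    simpa [div_eq_mul_inv] using tendsto_const_nhds.add this
  refine h1.congr' ?_
  filter_upwards [eventually_gt_atTop (1:ℝ)] with γ hγ
  have hγ0 : (0:ℝ) < γ := by linarith
  have h1γ : (0:ℝ) < 1 + 1/γ := by positivity
  have : (1:ℝ) + γ = γ * (1 + 1/γ) := by field_simp; ring
  rw [this, Real.log_mul hγ0.ne' h1γ.ne']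
  have hlog : Real.log γ ≠ 0 := (Real.log_pos hγ).ne'
  field_simp

/-- Fix T > 1. As γ → +∞, R_BKIC/log γ → 1 − 1/T (nonzero DoF) while
R_t/log γ → 0 (zero DoF). -/
theorem degrees_of_freedom (T : ℝ) (hT : 1 < T) :
    Tendsto (fun γ : ℝ => (1 - 1 / T) * Real.log (1 + γ) / Real.log γ)
      atTop (nhds (1 - 1 / T)) ∧
    Tendsto (fun γ : ℝ => Real.log (1 + (T - 1) * γ / (T + γ)) / Real.log γ)
      atTop (nhds 0) := by
  constructor
  · have := log_ratio_limit.const_mul (1 - 1/T)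
    simpa [mul_div_assoc, mul_one] using this
  · have harg : Tendsto (fun γ : ℝ => 1 + (T - 1) * γ / (T + γ)) atTop (nhds T) := by
      have h1 : Tendsto (fun γ : ℝ => (T - 1) / (T/γ + 1)) atTop (nhds (T - 1)) := by
        have hden : Tendsto (fun γ : ℝ => T/γ + 1) atTop (nhds 1) := by
          have : Tendsto (fun γ : ℝ => T/γ) atTop (nhds 0) := by
            simpa [div_eq_mul_inv] using tendsto_inv_atTop_zero.const_mul T
          simpa using this.add tendsto_const_nhds
        simpa [Pi.div_def] using tendsto_const_nhds.div hden one_ne_zero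
      have h2 : Tendsto (fun γ : ℝ => (T - 1) * γ / (T + γ)) atTop (nhds (T - 1)) := by
        refine h1.congr' ?_
        filter_upwards [eventually_gt_atTop (0:ℝ)] with γ hγ
        rw [eq_comm]
        rcases eq_or_ne (T + γ) 0 with h | h
        · rw [h, div_zero]
          have : T/γ + 1 = 0 := by field_simp; linarith
          rw [this, div_zero]
        · field_simp
      have := tendsto_const_nhds.add h2 (f := fun _ : ℝ => (1:ℝ))
      simpa using this
    have hnum : Tendsto (fun γ : ℝ => Real.log (1 + (T - 1) * γ / (T + γ)))
        atTop (nhds (Real.log T)) := by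
      have hT0 : T ≠ 0 := by linarith
      exact ((Real.continuousAt_log hT0).tendsto.comp harg)
    have hinv : Tendsto (fun γ : ℝ => (Real.log γ)⁻¹) atTop (nhds 0) :=
      Real.tendsto_log_atTop.inv_tendsto_atTop
    have := hnum.mul hinv
    simpa [div_eq_mul_inv] using this
end
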